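/- Two cDGs D₁ and D₂ on the same node set, each containing every directed loop, are Markov equivalent if and only if they have the same directed edges and are collider equivalent. -/

import Mathlib

universe u

/-- A directed correlation graph (cDG): directed edges (loops allowed) and
blunt edges (symmetric, no loops). -/
structure CDG (V : Type u) where
  dir : V → V → Prop
  blunt : V → V → Prop
  blunt_symm : ∀ a b, blunt a b → blunt b a
  blunt_irrefl : ∀ a, ¬ blunt a a

namespace CDG

variable {V : Type u}

/-- `anc D a b` : `a` is an ancestor of `b` (directed path from `a` to `b`;
every node is its own ancestor). -/
def anc (D : CDG V) (a b : V) : Prop := Relation.ReflTransGen D.dir a b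

/-- `an(C)`: the set of ancestors of `C`. -/
def ancSet (D : CDG V) (C : Set V) : Set V := {a | ∃ c ∈ C, D.anc a c}

/-- An edge instance between `a` and `b`, with its orientation. -/
inductive Edge (D : CDG V) : V → V → Type u
  | fwd {a b : V} : D.dir a b → Edge D a b
  | bwd {a b : V} : D.dir b a → Edge D a b
  | bl  {a b : V} : D.blunt a b → Edge D a b

/-- The edge has a neck (head or stump) at its left endpoint. -/
def Edge.neckLeft {D : CDG V} {a b : V} : D.Edge a b → Prop
  | .fwd _ => False
  | .bwd _ => True
  | .bl _ => True

/-- The edge has a neck (head or stump) at its right endpoint. -/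
def Edge.neckRight {D : CDG V} {a b : V} : D.Edge a b → Prop
  | .fwd _ => True
  | .bwd _ => False
  | .bl _ => True

/-- The edge has a head (arrowhead) at its right endpoint. -/
def Edge.headRight {D : CDG V} {a b : V} : D.Edge a b → Prop
  | .fwd _ => True
  | _ => False

/-- The edge is a blunt edge. -/
def Edge.isBlunt {D : CDG V} {a b : V} : D.Edge a b → Prop
  | .bl _ => True
  | _ => False

/-- A walk from `a` to `b` in `D`. -/
inductive Walk (D : CDG V) : V → V → Type u
  | nil (a : V) : Walk D a a
  | cons {a m c : V} : D.Edge a m → Walk D m c → Walk D a c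

namespace Walk

variable {D : CDG V}

def length : ∀ {a b : V}, D.Walk a b → ℕ
  | _, _, .nil _ => 0
  | _, _, .cons _ w => w.length + 1

def support : ∀ {a b : V}, D.Walk a b → List V
  | a, _, .nil _ => [a]
  | a, _, .cons _ w => a :: w.support

/-- The list of nonendpoint (internal) node instances of a walk. -/
def internal : ∀ {a b : V}, D.Walk a b → List V
  | _, _, .nil _ => []
  | _, _, .cons _ (.nil _) => []
  | _, _, .cons (m := m) _ w => m :: w.internal

/-- The final edge of the walk has a head at the terminal node. -/
def lastHead : ∀ {a b : V}, D.Walk a b → Prop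
  | _, _, .nil _ => False
  | _, _, .cons e (.nil _) => e.headRight
  | _, _, .cons _ w => w.lastHead

/-- Every collider on the walk is in `an(C)` and no noncollider is in `C`. -/
def mOpen (C : Set V) : ∀ {a b : V}, D.Walk a b → Prop
  | _, _, .nil _ => True
  | _, _, .cons _ (.nil _) => True
  | _, _, .cons (m := m) e₁ (.cons e₂ w) =>
      ((e₁.neckRight ∧ e₂.neckLeft) → m ∈ D.ancSet C) ∧
      (¬ (e₁.neckRight ∧ e₂.neckLeft) → m ∉ C) ∧
      mOpen C (Walk.cons e₂ w)

/-- Every nonendpoint node of the walk is a collider. -/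
def allColliders : ∀ {a b : V}, D.Walk a b → Prop
  | _, _, .nil _ => True
  | _, _, .cons _ (.nil _) => True
  | _, _, .cons e₁ (.cons e₂ w) =>
      e₁.neckRight ∧ e₂.neckLeft ∧ allColliders (Walk.cons e₂ w)

/-- Every edge of the walk is blunt. -/
def allBlunt : ∀ {a b : V}, D.Walk a b → Prop
  | _, _, .nil _ => True
  | _, _, .cons e w => e.isBlunt ∧ w.allBlunt

end Walk

/-- There is a μ-connecting walk from `a` to `b` given `C`. -/
def muConn (D : CDG V) (C : Set V) (a b : V) : Prop :=
  a ∉ C ∧ ∃ w : D.Walk a b, w.mOpen C ∧ w.lastHead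

/-- `B` is μ-separated from `A` given `C`. -/
def muSep (D : CDG V) (A B C : Set V) : Prop :=
  ∀ a ∈ A, ∀ b ∈ B, ¬ D.muConn C a b

/-- The independence model of `D`: all μ-separation triples. -/
def indep (D : CDG V) : Set (Set V × Set V × Set V) :=
  {p | D.muSep p.1 p.2.1 p.2.2}

/-- A (nontrivial) collider path. -/
def IsColliderPath {D : CDG V} {a b : V} (w : D.Walk a b) : Prop :=
  0 < w.length ∧ w.support.Nodup ∧ w.allColliders

/-- `a` and `b` are collider connected: some nontrivial walk between them has
every nonendpoint node a collider. -/
def colliderConn (D : CDG V) (a b : V) : Prop :=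
  ∃ w : D.Walk a b, 0 < w.length ∧ w.allColliders

/-- A weak inducing path from `a` to `b`: a collider path whose nonendpoint
nodes are all ancestors of `a` or of `b`. -/
def WeakInducing (D : CDG V) (a b : V) : Prop :=
  ∃ w : D.Walk a b, IsColliderPath w ∧ ∀ m ∈ w.internal, D.anc m a ∨ D.anc m b

/-- A weak inducing path between `a` and `b` (in either direction). -/
def WeakInducingBetween (D : CDG V) (a b : V) : Prop :=
  D.WeakInducing a b ∨ D.WeakInducing b a

end CDG

/-- A collider path `w` in `D₁` from α to β is covered in `D₂`. -/
def Covered {V : Type} (D₁ D₂ : CDG V) {α β : V} (w : D₁.Walk α β) : Prop :=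
  ∃ w' : D₂.Walk α β, CDG.IsColliderPath w' ∧
    ∀ m ∈ w'.internal, m ∈ D₁.ancSet ({α, β} ∪ {x | x ∈ w.internal})

/-- Collider equivalence of two cDGs with the same directed edges. -/
def ColliderEquiv {V : Type} (D₁ D₂ : CDG V) : Prop :=
  (∀ (α β : V) (w : D₁.Walk α β), CDG.IsColliderPath w → Covered D₁ D₂ w) ∧
  (∀ (α β : V) (w : D₂.Walk α β), CDG.IsColliderPath w → Covered D₂ D₁ w)


section Toolkit

namespace CDG

variable {V : Type u} {D : CDG V}

namespace Walk

/-- Concatenation of walks. -/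
def append : ∀ {a m c : V}, D.Walk a m → D.Walk m c → D.Walk a c
  | _, _, _, .nil _, w₂ => w₂
  | _, _, _, .cons e w, w₂ => .cons e (append w w₂)

/-- `neckRight` of the last edge, `q` for the empty walk. -/
def lastR : ∀ {a b : V}, Prop → D.Walk a b → Prop
  | _, _, q, .nil _ => q
  | _, _, _, .cons e w => lastR e.neckRight w

/-- `headRight` of the last edge, `q` for the empty walk. -/
def lastHd : ∀ {a b : V}, Prop → D.Walk a b → Prop
  | _, _, q, .nil _ => q
  | _, _, _, .cons e w => lastHd e.headRight w

/-- Fold a junction condition along the walk: `J v q nl` is imposed at every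
node `v` of the walk except the final one, where `q` is the `neckRight` of the
incoming edge (the supplied flag for the first node) and `nl` the `neckLeft`
of the outgoing edge. -/
def jfold (J : V → Prop → Prop → Prop) : ∀ {a b : V}, Prop → D.Walk a b → Prop
  | _, _, _, .nil _ => True
  | a, _, q, .cons e w => J a q e.neckLeft ∧ jfold J e.neckRight w

@[simp] lemma append_nil_left {a b : V} (w : D.Walk a b) :
    (Walk.nil a).append w = w := rfl

@[simp] lemma append_cons {a m₁ m₂ b : V} (e : D.Edge a m₁) (w₁ : D.Walk m₁ m₂)
    (w₂ : D.Walk m₂ b) : (Walk.cons e w₁).append w₂ = Walk.cons e (w₁.append w₂) := rfl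

lemma length_append : ∀ {a m c : V} (w₁ : D.Walk a m) (w₂ : D.Walk m c),
    (w₁.append w₂).length = w₁.length + w₂.length
  | _, _, _, .nil _, w₂ => by simp [append, length]
  | _, _, _, .cons e w, w₂ => by
      simp [append, length, length_append w w₂]; omega

lemma lastR_append : ∀ {a m c : V} (w₁ : D.Walk a m) (w₂ : D.Walk m c) (q : Prop),
    lastR q (w₁.append w₂) = lastR (lastR q w₁) w₂
  | _, _, _, .nil _, _, _ => rfl
  | _, _, _, .cons e w, w₂, q => lastR_append w w₂ e.neckRight

lemma lastHd_append : ∀ {a m c : V} (w₁ : D.Walk a m) (w₂ : D.Walk m c) (q : Prop),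
    lastHd q (w₁.append w₂) = lastHd (lastHd q w₁) w₂
  | _, _, _, .nil _, _, _ => rfl
  | _, _, _, .cons e w, w₂, q => lastHd_append w w₂ e.headRight

lemma jfold_append {J : V → Prop → Prop → Prop} :
    ∀ {a m c : V} (w₁ : D.Walk a m) (w₂ : D.Walk m c) (q : Prop),
    jfold J q (w₁.append w₂) ↔ jfold J q w₁ ∧ jfold J (lastR q w₁) w₂
  | _, _, _, .nil _, w₂, q => by simp [append, jfold, lastR]
  | _, _, _, .cons e w, w₂, q => by
      simp only [append_cons, jfold, lastR]
      rw [jfold_append w w₂ e.neckRight]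
      tauto

/-- μ-openness junction condition. -/
def OF (C : Set V) {a b : V} (q : Prop) (w : D.Walk a b) : Prop :=
  jfold (fun v q nl => (q ∧ nl → v ∈ D.ancSet C) ∧ (¬(q ∧ nl) → v ∉ C)) q w

/-- Strong μ-openness: colliders are in `C` itself. -/
def GFC (C : Set V) {a b : V} (q : Prop) (w : D.Walk a b) : Prop :=
  jfold (fun v q nl => (q ∧ nl → v ∈ C) ∧ (¬(q ∧ nl) → v ∉ C)) q w

/-- All junctions are colliders. -/
def CF {a b : V} (q : Prop) (w : D.Walk a b) : Prop :=
  jfold (fun _ q nl => q ∧ nl) q w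

@[simp] lemma OF_nil {C : Set V} {a : V} {q : Prop} : OF C q (Walk.nil (D := D) a) := trivial
@[simp] lemma GFC_nil {C : Set V} {a : V} {q : Prop} : GFC C q (Walk.nil (D := D) a) := trivial
@[simp] lemma CF_nil {a : V} {q : Prop} : CF q (Walk.nil (D := D) a) := trivial

lemma OF_cons {C : Set V} {a m b : V} {q : Prop} {e : D.Edge a m} {w : D.Walk m b} :
    OF C q (Walk.cons e w) ↔
      ((q ∧ e.neckLeft → a ∈ D.ancSet C) ∧ (¬(q ∧ e.neckLeft) → a ∉ C)) ∧
        OF C e.neckRight w := Iff.rfl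

lemma GFC_cons {C : Set V} {a m b : V} {q : Prop} {e : D.Edge a m} {w : D.Walk m b} :
    GFC C q (Walk.cons e w) ↔
      ((q ∧ e.neckLeft → a ∈ C) ∧ (¬(q ∧ e.neckLeft) → a ∉ C)) ∧
        GFC C e.neckRight w := Iff.rfl

lemma CF_cons {a m b : V} {q : Prop} {e : D.Edge a m} {w : D.Walk m b} :
    CF q (Walk.cons e w) ↔ (q ∧ e.neckLeft) ∧ CF e.neckRight w := Iff.rfl

lemma OF_append {C : Set V} {a m c : V} {w₁ : D.Walk a m} {w₂ : D.Walk m c} {q : Prop} :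
    OF C q (w₁.append w₂) ↔ OF C q w₁ ∧ OF C (lastR q w₁) w₂ := jfold_append w₁ w₂ q

lemma GFC_append {C : Set V} {a m c : V} {w₁ : D.Walk a m} {w₂ : D.Walk m c} {q : Prop} :
    GFC C q (w₁.append w₂) ↔ GFC C q w₁ ∧ GFC C (lastR q w₁) w₂ := jfold_append w₁ w₂ q

lemma CF_append {a m c : V} {w₁ : D.Walk a m} {w₂ : D.Walk m c} {q : Prop} :
    CF q (w₁.append w₂) ↔ CF q w₁ ∧ CF (lastR q w₁) w₂ := jfold_append w₁ w₂ q

/-- Bridge: `mOpen` in terms of `OF`. -/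
lemma mOpen_cons {C : Set V} : ∀ {a m b : V} (e : D.Edge a m) (t : D.Walk m b),
    (Walk.cons e t).mOpen C ↔ OF C e.neckRight t
  | _, _, _, e, .nil _ => by simp [mOpen, OF, jfold]
  | _, _, _, e, .cons e₂ t => by
      have ih := mOpen_cons (C := C) e₂ t
      simp only [mOpen, OF, jfold] at ih ⊢
      tauto

/-- Bridge: `allColliders` in terms of `CF`. -/
lemma allColliders_cons : ∀ {a m b : V} (e : D.Edge a m) (t : D.Walk m b),
    (Walk.cons e t).allColliders ↔ CF e.neckRight t
  | _, _, _, e, .nil _ => by simp [allColliders, CF, jfold]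
  | _, _, _, e, .cons e₂ t => by
      have ih := allColliders_cons e₂ t
      simp only [allColliders, CF, jfold] at ih ⊢
      tauto

/-- Bridge: `lastHead` in terms of `lastHd`. -/
lemma lastHead_cons : ∀ {a m b : V} (e : D.Edge a m) (t : D.Walk m b),
    (Walk.cons e t).lastHead ↔ lastHd e.headRight t
  | _, _, _, e, .nil _ => by simp [lastHead, lastHd]
  | _, _, _, e, .cons e₂ t => by
      have ih := lastHead_cons e₂ t
      simp only [lastHead, lastHd] at ih ⊢
      exact ih

lemma lastHd_indep : ∀ {a b : V} (w : D.Walk a b) (p p' : Prop), 0 < w.length →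
    (lastHd p w ↔ lastHd p' w)
  | _, _, .nil _, _, _, h => absurd h (by simp [length])
  | _, _, .cons e t, _, _, _ => Iff.rfl

lemma lastR_indep : ∀ {a b : V} (w : D.Walk a b) (p p' : Prop), 0 < w.length →
    (lastR p w ↔ lastR p' w)
  | _, _, .nil _, _, _, h => absurd h (by simp [length])
  | _, _, .cons e t, _, _, _ => Iff.rfl

lemma pos_length_of_lastHd : ∀ {a b : V} (w : D.Walk a b), lastHd False w → 0 < w.length
  | _, _, .nil _, h => absurd h not_false
  | _, _, .cons e t, _ => Nat.succ_pos _

lemma eq_of_length_zero : ∀ {a b : V} (w : D.Walk a b), w.length = 0 → a = b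
  | _, _, .nil _, _ => rfl
  | _, _, .cons e t, h => by simp [length] at h

lemma pos_length_of_ne {a b : V} (w : D.Walk a b) (h : a ≠ b) : 0 < w.length := by
  rcases Nat.eq_zero_or_pos w.length with h0 | h0
  · exact absurd (eq_of_length_zero w h0) h
  · exact h0

@[simp] lemma support_cons {a m b : V} (e : D.Edge a m) (t : D.Walk m b) :
    (Walk.cons e t).support = a :: t.support := rfl

lemma start_mem_support : ∀ {a b : V} (w : D.Walk a b), a ∈ w.support
  | _, _, .nil _ => List.mem_singleton_self _
  | _, _, .cons _ _ => List.mem_cons_self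

lemma end_mem_support : ∀ {a b : V} (w : D.Walk a b), b ∈ w.support
  | _, _, .nil _ => List.mem_singleton_self _
  | _, _, .cons _ t => List.mem_cons_of_mem _ (end_mem_support t)

lemma internal_cons_cons {a m₁ m₂ b : V} (e : D.Edge a m₁) (e₂ : D.Edge m₁ m₂)
    (t : D.Walk m₂ b) :
    (Walk.cons e (Walk.cons e₂ t)).internal = m₁ :: (Walk.cons e₂ t).internal := rfl

lemma internal_cons_nil {a m : V} (e : D.Edge a m) :
    (Walk.cons e (Walk.nil m)).internal = [] := rfl

lemma mem_internal_cons : ∀ {a m b : V} {e : D.Edge a m} {t : D.Walk m b} {x : V},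
    x ∈ t.internal → x ∈ (Walk.cons e t).internal
  | _, _, _, _, .nil _, x, h => by simp [internal] at h
  | _, _, _, e, .cons e₂ t, x, h => by
      rw [internal_cons_cons]; exact List.mem_cons_of_mem _ h

lemma internal_subset_support : ∀ {a b : V} (w : D.Walk a b) {x : V},
    x ∈ w.internal → x ∈ w.support
  | _, _, .nil _, x, h => by simp [internal] at h
  | _, _, .cons e (.nil _), x, h => by simp [internal] at h
  | _, _, .cons e (.cons e₂ t), x, h => by
      rw [internal_cons_cons] at h
      rcases List.mem_cons.1 h with h | h
      · subst h; exact List.mem_cons_of_mem _ (start_mem_support _)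
      · exact List.mem_cons_of_mem _ (internal_subset_support _ h)

lemma mem_support_cases : ∀ {a b : V} (w : D.Walk a b) {x : V},
    x ∈ w.support → x = a ∨ x = b ∨ x ∈ w.internal
  | _, _, .nil _, x, h => Or.inl (by simpa [support] using h)
  | _, _, .cons e (.nil _), x, h => by
      simp only [support, List.mem_cons, List.mem_singleton] at h
      rcases h with h | h
      · exact Or.inl h
      · exact Or.inr (Or.inl (by simpa using h))
  | _, _, .cons e (.cons e₂ t), x, h => by
      rcases List.mem_cons.1 h with h | h
      · exact Or.inl h
      · rcases mem_support_cases (Walk.cons e₂ t) h with h | h | h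
        · rw [internal_cons_cons]
          exact Or.inr (Or.inr (List.mem_cons.2 (Or.inl h)))
        · exact Or.inr (Or.inl h)
        · exact Or.inr (Or.inr (mem_internal_cons h))

lemma mem_support_append : ∀ {a m b : V} (w₁ : D.Walk a m) (w₂ : D.Walk m b) {x : V},
    x ∈ (w₁.append w₂).support ↔ x ∈ w₁.support ∨ x ∈ w₂.support
  | _, _, _, .nil _, w₂, x => by
      constructor
      · exact fun h => Or.inr h
      · rintro (h | h)
        · simp [support] at h; subst h; exact start_mem_support _
        · exact h
  | _, _, _, .cons e t, w₂, x => by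
      rw [append_cons, support_cons, support_cons, List.mem_cons, List.mem_cons,
        mem_support_append t w₂]
      tauto

lemma internal_append_left : ∀ {a m b : V} (w₁ : D.Walk a m) (w₂ : D.Walk m b) {x : V},
    x ∈ w₁.internal → x ∈ (w₁.append w₂).internal
  | _, _, _, .nil _, w₂, x, h => by simp [internal] at h
  | _, _, _, .cons e (.nil _), w₂, x, h => by simp [internal] at h
  | _, _, _, .cons e (.cons e₂ t), w₂, x, h => by
      rw [internal_cons_cons] at h
      have hshape : (Walk.cons e₂ t).append w₂ = Walk.cons e₂ (t.append w₂) := rfl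
      rw [append_cons, hshape, internal_cons_cons]
      rcases List.mem_cons.1 h with h | h
      · exact List.mem_cons.2 (Or.inl h)
      · refine List.mem_cons.2 (Or.inr ?_)
        have := internal_append_left (Walk.cons e₂ t) w₂ h
        rwa [hshape] at this

lemma internal_append_right : ∀ {a m b : V} (w₁ : D.Walk a m) (w₂ : D.Walk m b) {x : V},
    x ∈ w₂.internal → x ∈ (w₁.append w₂).internal
  | _, _, _, .nil _, w₂, x, h => h
  | _, _, _, .cons e t, w₂, x, h =>
      mem_internal_cons (internal_append_right t w₂ h)

lemma internal_append_mid : ∀ {a m b : V} (w₁ : D.Walk a m) (w₂ : D.Walk m b),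
    0 < w₁.length → 0 < w₂.length → m ∈ (w₁.append w₂).internal
  | _, _, _, .nil _, w₂, h₁, _ => absurd h₁ (by simp [Walk.length])
  | _, _, _, .cons e (.nil _), w₂, _, h₂ => by
      cases w₂ with
      | nil => exact absurd h₂ (by simp [Walk.length])
      | cons e₂ t₂ => rw [append_cons, append_nil_left, internal_cons_cons]
                      exact List.mem_cons_self
  | _, _, _, .cons e (.cons e₂ t), w₂, _, h₂ => by
      rw [append_cons]
      exact mem_internal_cons
        (internal_append_mid (Walk.cons e₂ t) w₂ (by simp [Walk.length]) h₂)

lemma internal_append_cases : ∀ {a m b : V} (w₁ : D.Walk a m) (w₂ : D.Walk m b) {x : V},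
    x ∈ (w₁.append w₂).internal → x ∈ w₁.internal ∨ x = m ∨ x ∈ w₂.internal
  | _, _, _, .nil _, w₂, x, h => Or.inr (Or.inr h)
  | _, _, _, .cons e (.nil _), w₂, x, h => by
      rw [append_cons, append_nil_left] at h
      cases w₂ with
      | nil => simp [internal] at h
      | cons e₂ t₂ =>
          rw [internal_cons_cons] at h
          rcases List.mem_cons.1 h with h | h
          · exact Or.inr (Or.inl h)
          · exact Or.inr (Or.inr h)
  | _, _, _, .cons e (.cons e₂ t), w₂, x, h => by
      rw [append_cons] at h
      have hshape : (Walk.cons e₂ t).append w₂ = Walk.cons e₂ (t.append w₂) := rfl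
      rw [hshape, internal_cons_cons] at h
      rcases List.mem_cons.1 h with h | h
      · exact Or.inl (by rw [internal_cons_cons, h]; exact List.mem_cons_self)
      · rw [← hshape] at h
        rcases internal_append_cases (Walk.cons e₂ t) w₂ h with h | h | h
        · exact Or.inl (mem_internal_cons h)
        · exact Or.inr (Or.inl h)
        · exact Or.inr (Or.inr h)

end Walk

section EdgeLemmas

@[simp] lemma Edge.neckLeft_fwd {a b : V} (h : D.dir a b) : (Edge.fwd h).neckLeft = False := rfl
@[simp] lemma Edge.neckLeft_bwd {a b : V} (h : D.dir b a) : (Edge.bwd h).neckLeft = True := rfl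
@[simp] lemma Edge.neckLeft_bl {a b : V} (h : D.blunt a b) : (Edge.bl h).neckLeft = True := rfl
@[simp] lemma Edge.neckRight_fwd {a b : V} (h : D.dir a b) : (Edge.fwd h).neckRight = True := rfl
@[simp] lemma Edge.neckRight_bwd {a b : V} (h : D.dir b a) : (Edge.bwd h).neckRight = False := rfl
@[simp] lemma Edge.neckRight_bl {a b : V} (h : D.blunt a b) : (Edge.bl h).neckRight = True := rfl
@[simp] lemma Edge.headRight_fwd {a b : V} (h : D.dir a b) : (Edge.fwd h).headRight = True := rfl
@[simp] lemma Edge.headRight_bwd {a b : V} (h : D.dir b a) : (Edge.bwd h).headRight = False := rfl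
@[simp] lemma Edge.headRight_bl {a b : V} (h : D.blunt a b) : (Edge.bl h).headRight = False := rfl

lemma Edge.eq_fwd_of_not_neckLeft {a b : V} (e : D.Edge a b) (h : ¬ e.neckLeft) :
    ∃ hd : D.dir a b, e = Edge.fwd hd := by
  cases e with
  | fwd hd => exact ⟨hd, rfl⟩
  | bwd hd => exact absurd trivial h
  | bl g => exact absurd trivial h

lemma Edge.eq_fwd_of_headRight {a b : V} (e : D.Edge a b) (h : e.headRight) :
    ∃ hd : D.dir a b, e = Edge.fwd hd := by
  cases e with
  | fwd hd => exact ⟨hd, rfl⟩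
  | bwd hd => exact absurd h not_false
  | bl g => exact absurd h not_false

lemma Edge.cases_of_neckLeft {a b : V} (e : D.Edge a b) (h : e.neckLeft) :
    (∃ hd : D.dir b a, e = Edge.bwd hd) ∨ (∃ g : D.blunt a b, e = Edge.bl g) := by
  cases e with
  | fwd hd => exact absurd h not_false
  | bwd hd => exact Or.inl ⟨hd, rfl⟩
  | bl g => exact Or.inr ⟨g, rfl⟩

end EdgeLemmas

section AncLemmas

variable {C S T : Set V}

lemma mem_ancSet_of_mem {c : V} (h : c ∈ S) : c ∈ D.ancSet S :=
  ⟨c, h, Relation.ReflTransGen.refl⟩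

lemma ancSet_mono (h : S ⊆ T) : D.ancSet S ⊆ D.ancSet T :=
  fun _ ⟨c, hc, hanc⟩ => ⟨c, h hc, hanc⟩

lemma mem_ancSet_singleton {x m : V} : m ∈ D.ancSet {x} ↔ D.anc m x := by
  constructor
  · rintro ⟨c, hc, hanc⟩; rw [Set.mem_singleton_iff] at hc; rwa [hc] at hanc
  · exact fun h => ⟨x, rfl, h⟩

lemma ancSet_union : D.ancSet (S ∪ T) = D.ancSet S ∪ D.ancSet T := by
  ext m
  constructor
  · rintro ⟨c, hc | hc, hanc⟩
    · exact Or.inl ⟨c, hc, hanc⟩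
    · exact Or.inr ⟨c, hc, hanc⟩
  · rintro (⟨c, hc, hanc⟩ | ⟨c, hc, hanc⟩)
    · exact ⟨c, Or.inl hc, hanc⟩
    · exact ⟨c, Or.inr hc, hanc⟩

lemma ancSet_closed {m z : V} (h : D.dir m z) (hz : z ∈ D.ancSet S) : m ∈ D.ancSet S := by
  obtain ⟨c, hc, hanc⟩ := hz
  exact ⟨c, hc, Relation.ReflTransGen.head h hanc⟩

lemma ancSet_of_subset_ancSet (h : T ⊆ D.ancSet S) : D.ancSet T ⊆ D.ancSet S := by
  rintro m ⟨c, hc, hanc⟩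
  obtain ⟨c', hc', hanc'⟩ := h hc
  exact ⟨c', hc', hanc.trans hanc'⟩

lemma anc_congr {G H : CDG V} (hdir : ∀ a b, G.dir a b ↔ H.dir a b) {a b : V} :
    G.anc a b ↔ H.anc a b := by
  constructor
  · exact fun h => Relation.ReflTransGen.mono (fun x y hxy => (hdir x y).1 hxy) _ _ h
  · exact fun h => Relation.ReflTransGen.mono (fun x y hxy => (hdir x y).2 hxy) _ _ h

lemma ancSet_congr {G H : CDG V} (hdir : ∀ a b, G.dir a b ↔ H.dir a b) (S : Set V) :
    G.ancSet S = H.ancSet S := by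
  ext m
  constructor
  · rintro ⟨c, hc, hanc⟩; exact ⟨c, hc, (anc_congr hdir).1 hanc⟩
  · rintro ⟨c, hc, hanc⟩; exact ⟨c, hc, (anc_congr hdir).2 hanc⟩

end AncLemmas

/-- Bridge for `muConn`. -/
lemma muConn_iff_OF {C : Set V} {a b : V} :
    D.muConn C a b ↔ a ∉ C ∧ ∃ w : D.Walk a b, w.OF C False ∧ Walk.lastHd False w := by
  constructor
  · rintro ⟨ha, w, ho, hl⟩
    refine ⟨ha, ?_⟩
    cases w with
    | nil => exact absurd hl not_false
    | cons e t =>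
        refine ⟨Walk.cons e t, ?_, ?_⟩
        · rw [Walk.OF_cons]
          exact ⟨⟨fun h => absurd h.1 not_false, fun _ => ha⟩, (Walk.mOpen_cons e t).1 ho⟩
        · exact (Walk.lastHead_cons e t).1 hl
  · rintro ⟨ha, w, ho, hl⟩
    refine ⟨ha, w, ?_, ?_⟩
    · cases w with
      | nil => simp [Walk.mOpen]
      | cons e t => exact (Walk.mOpen_cons e t).2 (Walk.OF_cons.1 ho).2
    · cases w with
      | nil => exact absurd hl not_false
      | cons e t => exact (Walk.lastHead_cons e t).2 hl

section Constructions

variable {C : Set V}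

/-- A directed path, avoiding `C`, as a μ-open walk of forward edges. -/
lemma downWalk : ∀ {m y : V}, D.anc m y →
    (∀ zz, D.anc m zz → zz ≠ y → zz ∉ C) → ∃ σ : D.Walk m y, ∀ q : Prop, σ.OF C q := by
  intro m y h
  induction h using Relation.ReflTransGen.head_induction_on with
  | refl => exact fun _ => ⟨Walk.nil y, fun _ => trivial⟩
  | @head m z hd htail ih =>
      intro Hm
      by_cases hmy : m = y
      · subst hmy; exact ⟨Walk.nil m, fun _ => trivial⟩
      · have hmC : m ∉ C := Hm m Relation.ReflTransGen.refl hmy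
        obtain ⟨σ', hσ'⟩ := ih (fun zz hzz => Hm zz (Relation.ReflTransGen.head hd hzz))
        refine ⟨Walk.cons (Edge.fwd hd) σ', fun q => ?_⟩
        rw [Walk.OF_cons]
        exact ⟨⟨fun hh => hh.2.elim, fun _ => hmC⟩, hσ' True⟩

/-- A reversed directed path, avoiding `C`, as a walk of backward edges. -/
lemma upWalk : ∀ {x m : V}, D.anc m x → (∀ zz, D.anc m zz → zz ∉ C) → x ∉ C →
    ∃ σ : D.Walk x m, ∀ q : Prop, (q → x ∈ D.ancSet C) →
      σ.OF C q ∧ (Walk.lastR q σ → m ∈ D.ancSet C) := by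
  intro x m h
  induction h with
  | refl => exact fun _ hx => ⟨Walk.nil m, fun q hq => ⟨trivial, hq⟩⟩
  | @tail z x h₁ hd ih =>
      intro Hm hx
      obtain ⟨σz, hσz⟩ := ih Hm (Hm z h₁)
      refine ⟨Walk.cons (Edge.bwd hd) σz, fun q hq => ?_⟩
      constructor
      · rw [Walk.OF_cons]
        exact ⟨⟨fun hh => hq hh.1, fun _ => hx⟩, (hσz False (fun f => f.elim)).1⟩
      · exact (hσz False (fun f => f.elim)).2

/-- Detour from `u ∈ an(C) \ C` down to `C` and back. -/
lemma detour {u : V} (hA : u ∈ D.ancSet C) (hC : u ∉ C) :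
    ∃ wp : D.Walk u u, (∀ q : Prop, wp.GFC C q) ∧ (∀ q : Prop, ¬ Walk.lastR q wp) := by
  obtain ⟨c, hcC, hanc⟩ := hA
  induction hanc using Relation.ReflTransGen.head_induction_on with
  | refl => exact absurd hcC hC
  | @head u z hd htail ih =>
      by_cases hz : z ∈ C
      · refine ⟨Walk.cons (Edge.fwd hd) (Walk.cons (Edge.bwd hd) (Walk.nil u)), fun q => ?_,
          fun q => not_false⟩
        rw [Walk.GFC_cons]
        refine ⟨⟨fun hh => hh.2.elim, fun _ => hC⟩, ?_⟩
        rw [Walk.GFC_cons]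
        exact ⟨⟨fun _ => hz, fun hn => absurd ⟨trivial, trivial⟩ hn⟩, trivial⟩
      · obtain ⟨wpz, hwpz, hlast⟩ := ih hz
        refine ⟨Walk.cons (Edge.fwd hd) (wpz.append (Walk.cons (Edge.bwd hd) (Walk.nil u))),
          fun q => ?_, fun q => ?_⟩
        · rw [Walk.GFC_cons]
          refine ⟨⟨fun hh => hh.2.elim, fun _ => hC⟩, ?_⟩
          rw [Walk.GFC_append]
          refine ⟨hwpz _, ?_⟩
          rw [Walk.GFC_cons]
          exact ⟨⟨fun hh => absurd hh.1 (hlast _), fun _ => hz⟩, trivial⟩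
        · intro hcon
          have : Walk.lastR q (Walk.cons (Edge.fwd hd)
              (wpz.append (Walk.cons (Edge.bwd hd) (Walk.nil u)))) =
              Walk.lastR (Walk.lastR True wpz) (Walk.cons (Edge.bwd hd) (Walk.nil u)) := by
            show Walk.lastR True (wpz.append _) = _
            rw [Walk.lastR_append]
          rw [this] at hcon
          exact hcon

end Constructions

section NodupLemmas

lemma ne_endpoints_of_nodup {a b : V} (w : D.Walk a b) (hnd : w.support.Nodup)
    (hpos : 0 < w.length) : a ≠ b := by
  cases w with
  | nil => exact absurd hpos (by simp [Walk.length])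
  | cons e t =>
      rw [Walk.support_cons] at hnd
      intro hab
      exact (List.nodup_cons.1 hnd).1 (hab ▸ Walk.end_mem_support t)

lemma internal_ne_endpoints_of_nodup : ∀ {a b : V} (w : D.Walk a b),
    w.support.Nodup → ∀ {m : V}, m ∈ w.internal → m ≠ a ∧ m ≠ b
  | _, _, .nil _, _, m, h => by simp [Walk.internal] at h
  | _, _, .cons e (.nil _), _, m, h => by simp [Walk.internal] at h
  | _, _, .cons e (.cons e₂ t), hnd, m, h => by
      rw [Walk.support_cons] at hnd
      have hnd' := (List.nodup_cons.1 hnd).2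
      have hnotin := (List.nodup_cons.1 hnd).1
      rw [Walk.internal_cons_cons] at h
      rcases List.mem_cons.1 h with h | h
      · subst h
        constructor
        · intro hma; exact hnotin (hma ▸ Walk.start_mem_support _)
        · rw [Walk.support_cons] at hnd'
          intro hmb
          exact (List.nodup_cons.1 hnd').1 (hmb ▸ Walk.end_mem_support t)
      · obtain ⟨h1, h2⟩ := internal_ne_endpoints_of_nodup (Walk.cons e₂ t) hnd' h
        refine ⟨fun hma => ?_, h2⟩
        exact hnotin (hma ▸ Walk.internal_subset_support _ h)

lemma splitAtMem : ∀ {x y v : V} (w : D.Walk x y), v ∈ w.support →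
    ∃ (w₁ : D.Walk x v) (w₂ : D.Walk v y), w = w₁.append w₂
  | _, _, v, .nil _, h => by
      simp only [Walk.support, List.mem_singleton] at h
      subst h
      exact ⟨Walk.nil v, Walk.nil v, rfl⟩
  | _, _, v, .cons e t, h => by
      rcases List.mem_cons.1 h with h | h
      · subst h
        exact ⟨Walk.nil v, Walk.cons e t, rfl⟩
      · obtain ⟨t₁, t₂, ht⟩ := splitAtMem t h
        exact ⟨Walk.cons e t₁, t₂, by rw [ht]; rfl⟩

lemma dupSplit : ∀ {x y : V} (w : D.Walk x y), ¬ w.support.Nodup →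
    ∃ (v : V) (w₁ : D.Walk x v) (w₂ : D.Walk v v) (w₃ : D.Walk v y),
      w = w₁.append (w₂.append w₃) ∧ 0 < w₂.length
  | _, _, .nil _, h => absurd (List.nodup_singleton _) h
  | x, y, .cons e t, h => by
      rw [Walk.support_cons, List.nodup_cons] at h
      by_cases hx : x ∈ t.support
      · obtain ⟨t₁, t₂, ht⟩ := splitAtMem t hx
        refine ⟨x, Walk.nil x, Walk.cons e t₁, t₂, ?_, by simp [Walk.length]⟩
        rw [ht]; rfl
      · have hnd : ¬ t.support.Nodup := fun hn => h ⟨hx, hn⟩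
        obtain ⟨v, t₁, t₂, t₃, ht, hpos⟩ := dupSplit t hnd
        exact ⟨v, Walk.cons e t₁, t₂, t₃, by rw [ht]; rfl, hpos⟩

lemma CF_to_allColliders {x y : V} {q : Prop} (w : D.Walk x y) (h : w.CF q) :
    w.allColliders := by
  cases w with
  | nil => trivial
  | cons e t =>
      rw [Walk.allColliders_cons]
      exact (Walk.CF_cons.1 h).2

lemma allColliders_splice {x v y : V} (w₁ : D.Walk x v) (w₂ : D.Walk v v) (w₃ : D.Walk v y)
    (h : (w₁.append (w₂.append w₃)).allColliders) (h₂ : 0 < w₂.length) :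
    (w₁.append w₃).allColliders := by
  cases w₁ with
  | nil =>
      rw [Walk.append_nil_left] at h ⊢
      cases w₂ with
      | nil => exact absurd h₂ (by simp [Walk.length])
      | cons e₂ t₂ =>
          have h' : (Walk.cons e₂ (t₂.append w₃)).allColliders := h
          rw [Walk.allColliders_cons, Walk.CF_append] at h'
          exact CF_to_allColliders w₃ h'.2
  | cons e₁ t₁ =>
      have h' : (Walk.cons e₁ (t₁.append (w₂.append w₃))).allColliders := h
      rw [Walk.allColliders_cons, Walk.CF_append, Walk.CF_append] at h'
      obtain ⟨hcf₁, hcf₂, hcf₃⟩ := h'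
      show (Walk.cons e₁ (t₁.append w₃)).allColliders
      rw [Walk.allColliders_cons, Walk.CF_append]
      refine ⟨hcf₁, ?_⟩
      cases w₃ with
      | nil => trivial
      | cons e₃ t₃ =>
          rw [Walk.CF_cons] at hcf₃ ⊢
          refine ⟨⟨?_, hcf₃.1.2⟩, hcf₃.2⟩
          cases w₂ with
          | nil => exact absurd h₂ (by simp [Walk.length])
          | cons e₂' t₂' => exact (Walk.CF_cons.1 hcf₂).1.1

/-- Extract a collider path from a collider walk with distinct endpoints. -/
lemma extract {x y : V} (hxy : x ≠ y) : ∀ (n : ℕ) (w : D.Walk x y), w.length ≤ n →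
    w.allColliders → ∃ w' : D.Walk x y, w'.allColliders ∧
      (∀ m ∈ w'.support, m ∈ w.support) ∧ w'.support.Nodup := by
  intro n
  induction n with
  | zero =>
      intro w hlen _
      exact absurd (Walk.eq_of_length_zero w (Nat.le_zero.1 hlen)) hxy
  | succ n ih =>
      intro w hlen hac
      by_cases hnd : w.support.Nodup
      · exact ⟨w, hac, fun _ h => h, hnd⟩
      · obtain ⟨v, w₁, w₂, w₃, heq, hpos⟩ := dupSplit w hnd
        have hlen' : (w₁.append w₃).length ≤ n := by
          have h1 : w.length = w₁.length + (w₂.length + w₃.length) := by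
            rw [heq, Walk.length_append, Walk.length_append]
          have h2 : (w₁.append w₃).length = w₁.length + w₃.length := Walk.length_append _ _
          omega
        have hac' : (w₁.append w₃).allColliders := allColliders_splice w₁ w₂ w₃ (heq ▸ hac) hpos
        obtain ⟨w', hw₁, hw₂, hw₃⟩ := ih (w₁.append w₃) hlen' hac'
        refine ⟨w', hw₁, fun m hm => ?_, hw₃⟩
        have := hw₂ m hm
        rw [Walk.mem_support_append] at this
        rw [heq, Walk.mem_support_append, Walk.mem_support_append]
        tauto

end NodupLemmas

section MainLemmas

variable {C : Set V}

lemma internal_cons_sub {a m b : V} {e : D.Edge a m} {t : D.Walk m b} {v : V}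
    (h : v ∈ (Walk.cons e t).internal) : v = m ∨ v ∈ t.internal := by
  cases t with
  | nil => simp [Walk.internal] at h
  | cons e₂ t₂ =>
      rw [Walk.internal_cons_cons] at h
      exact List.mem_cons.1 h

/-- Normalization: every μ-connecting walk can be replaced by one whose
colliders lie in `C` itself. -/
lemma normalize : ∀ {u b : V} (w : D.Walk u b) (p : Prop), w.OF C p →
    Walk.lastHd False w → ∃ w' : D.Walk u b, w'.GFC C p ∧ Walk.lastHd False w'
  | _, _, .nil _, _, _, hl => absurd hl not_false
  | u, b, .cons (m := mm) e t, p, ho, hl => by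
      rw [Walk.OF_cons] at ho
      obtain ⟨⟨hj1, hj2⟩, hot⟩ := ho
      have hl' : Walk.lastHd e.headRight t := hl
      have H : ∃ t' : D.Walk mm b, Walk.GFC C e.neckRight t' ∧ Walk.lastHd e.headRight t' := by
        cases t with
        | nil => exact ⟨Walk.nil _, trivial, hl'⟩
        | cons e₂ t₂ =>
            have hpos : 0 < (Walk.cons e₂ t₂).length := Nat.succ_pos _
            have hlf : Walk.lastHd False (Walk.cons e₂ t₂) :=
              (Walk.lastHd_indep _ e.headRight False hpos).1 hl'
            obtain ⟨t', h1, h2⟩ := normalize (Walk.cons e₂ t₂) e.neckRight hot hlf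
            have hpos' : 0 < t'.length := Walk.pos_length_of_lastHd t' h2
            exact ⟨t', h1, (Walk.lastHd_indep t' False e.headRight hpos').1 h2⟩
      obtain ⟨t', h1, h2⟩ := H
      by_cases hcol : p ∧ e.neckLeft
      · have hA := hj1 hcol
        by_cases huC : u ∈ C
        · refine ⟨Walk.cons e t', ?_, h2⟩
          rw [Walk.GFC_cons]
          exact ⟨⟨fun _ => huC, fun hn => absurd hcol hn⟩, h1⟩
        · obtain ⟨wp, hwp, hlast⟩ := detour hA huC
          refine ⟨wp.append (Walk.cons e t'), ?_, ?_⟩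
          · rw [Walk.GFC_append]
            refine ⟨hwp p, ?_⟩
            rw [Walk.GFC_cons]
            exact ⟨⟨fun hh => absurd hh.1 (hlast p), fun _ => huC⟩, h1⟩
          · rw [Walk.lastHd_append]
            exact h2
      · refine ⟨Walk.cons e t', ?_, h2⟩
        rw [Walk.GFC_cons]
        exact ⟨⟨fun hh => absurd hh hcol, fun _ => hj2 hcol⟩, h1⟩

/-- Parse a maximal collider zone starting at a node of `C`. -/
lemma kpParse : ∀ {j b : V} (ρ : D.Walk j b), ρ.GFC C True → Walk.lastHd False ρ → j ∈ C →
    ∃ (y : V) (κt : D.Walk j y) (wrest : D.Walk y b),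
      ρ = κt.append wrest ∧ 0 < κt.length ∧ κt.CF True ∧
      (∀ v ∈ κt.internal, v ∈ C) ∧ y ∉ C ∧
      (Walk.lastR True κt ∨ y ∈ D.ancSet C) ∧
      wrest.GFC C (Walk.lastR True κt) ∧ Walk.lastHd False wrest
  | _, _, .nil _, _, hl, _ => absurd hl not_false
  | j, b, .cons (m := m₂) e₂ ρ', hg, hl, hjC => by
      rw [Walk.GFC_cons] at hg
      obtain ⟨⟨hj1, hj2⟩, hρ'⟩ := hg
      have hnl : e₂.neckLeft := by
        by_contra hn
        exact hj2 (fun hh => hn hh.2) hjC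
      rcases Edge.cases_of_neckLeft e₂ hnl with ⟨hd, rfl⟩ | ⟨g, rfl⟩
      · -- trailing backward edge: the zone ends here
        refine ⟨_, Walk.cons (Edge.bwd hd) (Walk.nil _), ρ', rfl, Nat.succ_pos _,
          ⟨⟨trivial, trivial⟩, trivial⟩, ?_, ?_, ?_, hρ', hl⟩
        · intro v hv; simp [Walk.internal] at hv
        · -- the next node is not in C
          cases ρ' with
          | nil => exact absurd hl not_false
          | cons e₃ ρ'' =>
              rw [Walk.GFC_cons] at hρ'
              exact hρ'.1.2 (fun hh => hh.1.elim)
        · exact Or.inr ⟨j, hjC, Relation.ReflTransGen.single hd⟩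
      · -- blunt edge
        by_cases hm₂ : m₂ ∈ C
        · have hl' : Walk.lastHd False ρ' := hl
          obtain ⟨y, κt', wrest, heq, hpos, hcf, hint, hyC, hdisj, hgw, hlw⟩ :=
            kpParse ρ' hρ' hl' hm₂
          refine ⟨y, Walk.cons (Edge.bl g) κt', wrest, by rw [heq]; rfl, Nat.succ_pos _,
            ⟨⟨trivial, trivial⟩, hcf⟩, ?_, hyC, hdisj, hgw, hlw⟩
          intro v hv
          rcases internal_cons_sub hv with hv | hv
          · exact hv ▸ hm₂
          · exact hint v hv
        · refine ⟨_, Walk.cons (Edge.bl g) (Walk.nil _), ρ', rfl, Nat.succ_pos _,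
            ⟨⟨trivial, trivial⟩, trivial⟩, ?_, hm₂, Or.inl trivial, hρ', hl⟩
          intro v hv; simp [Walk.internal] at hv

lemma head_mem_cases {x m y : V} (e : D.Edge x m) (t : D.Walk m y) :
    m = y ∨ m ∈ (Walk.cons e t).internal := by
  cases t with
  | nil => exact Or.inl rfl
  | cons e₂ t₂ =>
      refine Or.inr ?_
      rw [Walk.internal_cons_cons]
      exact List.mem_cons_self

/-- Fix up the tail of a covering collider path so that it becomes μ-open. -/
lemma rightFix : ∀ {m y : V} (ρt : D.Walk m y) (r : Prop), ρt.CF r →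
    (m = y ∨ m ∈ D.ancSet {y} ∪ D.ancSet C) →
    (∀ v ∈ ρt.internal, v ∈ D.ancSet {y} ∪ D.ancSet C) →
    y ∉ C → ∃ σt : D.Walk m y, σt.OF C r
  | _, _, .nil _, r, _, _, _, _ => ⟨Walk.nil _, trivial⟩
  | m, y, .cons (m := mid) e' t', r, hcf, hm, hint, hy => by
      rw [Walk.CF_cons] at hcf
      by_cases hmA : m ∈ D.ancSet C
      · have hm₂ : mid = y ∨ mid ∈ D.ancSet {y} ∪ D.ancSet C := by
          rcases head_mem_cases e' t' with h | h
          · exact Or.inl h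
          · exact Or.inr (hint _ h)
        obtain ⟨σt', hσt'⟩ := rightFix t' e'.neckRight hcf.2 hm₂
          (fun v hv => hint v (Walk.mem_internal_cons hv)) hy
        refine ⟨Walk.cons e' σt', ?_⟩
        rw [Walk.OF_cons]
        exact ⟨⟨fun _ => hmA, fun hn => absurd hcf.1 hn⟩, hσt'⟩
      · have hmy : D.anc m y := by
          rcases hm with rfl | hm
          · exact Relation.ReflTransGen.refl
          · rcases hm with hm | hm
            · exact mem_ancSet_singleton.1 hm
            · exact absurd hm hmA
        obtain ⟨σ, hσ⟩ := downWalk hmy (fun zz hzz _ hzzC => hmA ⟨zz, hzzC, hzz⟩)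
        exact ⟨σ, hσ r⟩

/-- Split a walk at the last internal node satisfying `P`. -/
lemma lastSplit (P : V → Prop) : ∀ {x y : V} (w : D.Walk x y),
    (∃ v ∈ w.internal, P v) → ∃ (v : V) (w₁ : D.Walk x v) (w₂ : D.Walk v y),
      w = w₁.append w₂ ∧ P v ∧ 0 < w₁.length ∧ 0 < w₂.length ∧ ∀ m ∈ w₂.internal, ¬ P m
  | _, _, .nil _, hex => by
      obtain ⟨v, hv, _⟩ := hex
      simp [Walk.internal] at hv
  | x, y, .cons e t, hex => by
      obtain ⟨v, hv, hPv⟩ := hex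
      by_cases hex' : ∃ v' ∈ t.internal, P v'
      · obtain ⟨v', t₁, t₂, heq, hP, hp1, hp2, hnone⟩ := lastSplit P t hex'
        exact ⟨v', Walk.cons e t₁, t₂, by rw [heq]; rfl, hP, Nat.succ_pos _, hp2, hnone⟩
      · rcases internal_cons_sub hv with hvm | hvt
        · subst hvm
          cases t with
          | nil => simp [Walk.internal] at hv
          | cons e₂ t₂ =>
              refine ⟨v, Walk.cons e (Walk.nil v), Walk.cons e₂ t₂, rfl, hPv,
                Nat.succ_pos _, Nat.succ_pos _, ?_⟩
              intro m hm hPm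
              exact hex' ⟨m, hm, hPm⟩
        · exact absurd ⟨v, hvt, hPv⟩ hex'

/-- From a covering collider path, build a μ-open walk. -/
lemma build {x y : V} (τ : D.Walk x y) (hac : τ.allColliders) (hpos : 0 < τ.length)
    (hint : ∀ m ∈ τ.internal, m ∈ D.ancSet {x} ∪ D.ancSet {y} ∪ D.ancSet C)
    (hx : x ∉ C) (hy : y ∉ C) (q : Prop) (hq : q → x ∈ D.ancSet C) :
    ∃ τ' : D.Walk x y, τ'.OF C q := by
  have hmem : ∀ m ∈ τ.internal, ¬ (D.anc m x ∧ m ∉ D.ancSet C) →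
      m ∈ D.ancSet {y} ∪ D.ancSet C := by
    intro m hm hnot
    rcases hint m hm with (hmx | hmy) | hmA
    · by_cases hA : m ∈ D.ancSet C
      · exact Or.inr hA
      · exact absurd ⟨mem_ancSet_singleton.1 hmx, hA⟩ hnot
    · exact Or.inl hmy
    · exact Or.inr hmA
  by_cases hL : ∃ v ∈ τ.internal, D.anc v x ∧ v ∉ D.ancSet C
  · obtain ⟨v, τ₁, τ₂, heq, ⟨hvx, hvA⟩, hp1, hp2, hnone⟩ :=
      lastSplit (fun v => D.anc v x ∧ v ∉ D.ancSet C) τ hL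
    obtain ⟨σL, hσL⟩ := upWalk hvx (fun zz hzz hzzC => hvA ⟨zz, hzzC, hzz⟩) hx
    cases τ₂ with
    | nil => exact absurd hp2 (by simp [Walk.length])
    | @cons _ mid2 _ e₂' t₂' =>
        cases τ₁ with
        | nil => exact absurd hp1 (by simp [Walk.length])
        | cons e₁ t₁ =>
            have hac' : ((Walk.cons e₁ t₁).append (Walk.cons e₂' t₂')).allColliders :=
              heq ▸ hac
            rw [Walk.append_cons, Walk.allColliders_cons, Walk.CF_append,
              Walk.CF_cons] at hac'
            obtain ⟨hcf₁, ⟨hf, hnl⟩, hcfT⟩ := hac'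
            have hintτ₂ : ∀ v' ∈ (Walk.cons e₂' t₂').internal, v' ∈ τ.internal := by
              intro v' hv'
              rw [heq]
              exact Walk.internal_append_right _ _ hv'
            have hm₂ : mid2 = y ∨ mid2 ∈ D.ancSet {y} ∪ D.ancSet C := by
              rcases head_mem_cases e₂' t₂' with h | h
              · exact Or.inl h
              · exact Or.inr (hmem _ (hintτ₂ _ h) (hnone _ h))
            obtain ⟨σt, hσt⟩ := rightFix t₂' e₂'.neckRight hcfT hm₂
              (fun v' hv' => hmem v' (hintτ₂ v' (Walk.mem_internal_cons hv'))
                (hnone v' (Walk.mem_internal_cons hv'))) hy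
            refine ⟨σL.append (Walk.cons e₂' σt), ?_⟩
            rw [Walk.OF_append]
            refine ⟨(hσL q hq).1, ?_⟩
            rw [Walk.OF_cons]
            exact ⟨⟨fun hh => (hσL q hq).2 hh.1,
              fun _ hvC => hvA (mem_ancSet_of_mem hvC)⟩, hσt⟩
  · cases τ with
    | nil => exact absurd hpos (by simp [Walk.length])
    | @cons _ mid3 _ e₁ t₁ =>
        rw [Walk.allColliders_cons] at hac
        have hintτ : ∀ v ∈ (Walk.cons e₁ t₁).internal,
            ¬ (D.anc v x ∧ v ∉ D.ancSet C) := fun v hv hP => hL ⟨v, hv, hP⟩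
        have hm₂ : mid3 = y ∨ mid3 ∈ D.ancSet {y} ∪ D.ancSet C := by
          rcases head_mem_cases e₁ t₁ with h | h
          · exact Or.inl h
          · exact Or.inr (hmem _ h (hintτ _ h))
        obtain ⟨σt, hσt⟩ := rightFix t₁ e₁.neckRight hac hm₂
          (fun v hv => hmem v (Walk.mem_internal_cons hv) (hintτ v (Walk.mem_internal_cons hv))) hy
        refine ⟨Walk.cons e₁ σt, ?_⟩
        rw [Walk.OF_cons]
        exact ⟨⟨fun hh => hq hh.1, fun _ => hx⟩, hσt⟩

end MainLemmas

section Transfer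

variable {G H : CDG V} {C : Set V}

/-- Replace a collider zone using the covering hypothesis and recurse. -/
lemma kcore (hdir : ∀ a b, G.dir a b ↔ H.dir a b)
    (hcov : ∀ (α β : V) (w : G.Walk α β), IsColliderPath w →
      ∃ w' : H.Walk α β, IsColliderPath w' ∧
        ∀ m ∈ w'.internal, m ∈ G.ancSet ({α, β} ∪ {x | x ∈ w.internal}))
    {n : ℕ}
    (ih : ∀ {u' b' : V} (w' : G.Walk u' b'), w'.length ≤ n → ∀ (p' q' : Prop),
      w'.GFC C p' → Walk.lastHd False w' → u' ∉ C → (q' → p' ∨ u' ∈ H.ancSet C) →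
      ∃ w₂ : H.Walk u' b', w₂.OF C q' ∧ Walk.lastHd False w₂)
    {u y b : V} (κ : G.Walk u y) (wrest : G.Walk y b)
    (hκpos : 0 < κ.length) (hκac : κ.allColliders) (hκint : ∀ v ∈ κ.internal, v ∈ C)
    (hyC : y ∉ C) (huC : u ∉ C)
    (hdisj : Walk.lastR False κ ∨ y ∈ H.ancSet C)
    (hgw : wrest.GFC C (Walk.lastR False κ)) (hlw : Walk.lastHd False wrest)
    (hlen : wrest.length ≤ n)
    (q : Prop) (hq : q → u ∈ H.ancSet C) :
    ∃ w₂ : H.Walk u b, w₂.OF C q ∧ Walk.lastHd False w₂ := by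
  by_cases huy : u = y
  · subst huy
    exact ih wrest hlen (Walk.lastR False κ) q hgw hlw huC (fun hq₀ => Or.inr (hq hq₀))
  · obtain ⟨κ', hac', hsup', hnd'⟩ := extract huy κ.length κ le_rfl hκac
    have hicp : IsColliderPath κ' := ⟨Walk.pos_length_of_ne κ' huy, hnd', hac'⟩
    obtain ⟨τ, hτicp, hτint⟩ := hcov u y κ' hicp
    have hsubS : ({u, y} ∪ {x | x ∈ κ'.internal} : Set V) ⊆ ({u} ∪ ({y} ∪ C)) := by
      intro z hz
      rcases hz with hz | hz
      · rcases Set.mem_insert_iff.1 hz with hz | hz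
        · exact Or.inl hz
        · exact Or.inr (Or.inl hz)
      · have hz' := hsup' z (Walk.internal_subset_support κ' hz)
        rcases Walk.mem_support_cases κ hz' with hz' | hz' | hz'
        · exact Or.inl hz'
        · exact Or.inr (Or.inl hz')
        · exact Or.inr (Or.inr (hκint z hz'))
    have hτint' : ∀ m ∈ τ.internal, m ∈ H.ancSet {u} ∪ H.ancSet {y} ∪ H.ancSet C := by
      intro m hm
      have h2 : m ∈ G.ancSet ({u} ∪ ({y} ∪ C)) := ancSet_mono hsubS (hτint m hm)
      rw [ancSet_union, ancSet_union, ancSet_congr hdir ({u} : Set V),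
        ancSet_congr hdir ({y} : Set V), ancSet_congr hdir C] at h2
      rcases h2 with h2 | h2 | h2
      · exact Or.inl (Or.inl h2)
      · exact Or.inl (Or.inr h2)
      · exact Or.inr h2
    obtain ⟨τ', hτ'⟩ := build (D := H) (C := C) τ hτicp.2.2 hτicp.1 hτint' huC hyC q hq
    obtain ⟨rest₂, hro, hrl⟩ := ih wrest hlen (Walk.lastR False κ) (Walk.lastR q τ')
      hgw hlw hyC (fun _ => hdisj)
    refine ⟨τ'.append rest₂, ?_, ?_⟩
    · rw [Walk.OF_append]
      exact ⟨hτ', hro⟩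
    · rw [Walk.lastHd_append]
      exact (Walk.lastHd_indep rest₂ False _ (Walk.pos_length_of_lastHd rest₂ hrl)).1 hrl

/-- The main transfer recursion. -/
lemma TRmain (hdir : ∀ a b, G.dir a b ↔ H.dir a b)
    (hcov : ∀ (α β : V) (w : G.Walk α β), IsColliderPath w →
      ∃ w' : H.Walk α β, IsColliderPath w' ∧
        ∀ m ∈ w'.internal, m ∈ G.ancSet ({α, β} ∪ {x | x ∈ w.internal})) :
    ∀ (n : ℕ) {u b : V} (w : G.Walk u b), w.length ≤ n → ∀ (p q : Prop),
      w.GFC C p → Walk.lastHd False w → u ∉ C → (q → p ∨ u ∈ H.ancSet C) →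
      ∃ w₂ : H.Walk u b, w₂.OF C q ∧ Walk.lastHd False w₂ := by
  intro n
  induction n with
  | zero =>
      intro u b w hlen p q hg hl huC hqp
      have := Walk.pos_length_of_lastHd w hl
      omega
  | succ n ih =>
      intro u b w hlen p q hg hl huC hqp
      cases w with
      | nil => exact absurd hl not_false
      | @cons _ mm _ e t =>
          rw [Walk.GFC_cons] at hg
          obtain ⟨⟨hj1, hj2⟩, hgt⟩ := hg
          have hlt' : Walk.lastHd e.headRight t := hl
          rw [Walk.length] at hlen
          cases e with
          | fwd hd =>
              cases t with
              | nil =>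
                  refine ⟨Walk.cons (Edge.fwd ((hdir _ _).1 hd)) (Walk.nil _), ?_, trivial⟩
                  rw [Walk.OF_cons]
                  exact ⟨⟨fun hh => hh.2.elim, fun _ => huC⟩, trivial⟩
              | @cons _ m₂ _ e₂ t₂ =>
                  have hlt : Walk.lastHd False (Walk.cons e₂ t₂) :=
                    (Walk.lastHd_indep (Walk.cons e₂ t₂) _ _ (Nat.succ_pos _)).1 hlt'
                  by_cases hmC : mm ∈ C
                  · -- entering a collider zone via a forward edge
                    obtain ⟨y, κt, wrest, heq, hκpos, hcf, hintC, hyC, hdisj, hgw, hlw⟩ :=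
                      kpParse (Walk.cons e₂ t₂) hgt hlt hmC
                    have hxA : u ∈ H.ancSet C := ⟨mm, hmC, Relation.ReflTransGen.single
                      ((hdir u mm).1 hd)⟩
                    have hlen' : wrest.length ≤ n := by
                      have h1 : (Walk.cons e₂ t₂).length = κt.length + wrest.length := by
                        rw [heq, Walk.length_append]
                      omega
                    refine kcore hdir hcov ih (Walk.cons (Edge.fwd hd) κt) wrest
                      (Nat.succ_pos _) ?_ ?_ hyC huC
                      (hdisj.imp id (fun hh => (ancSet_congr hdir C) ▸ hh))
                      hgw hlw hlen' q (fun _ => hxA)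
                    · rw [Walk.allColliders_cons]
                      exact hcf
                    · intro v hv
                      rcases internal_cons_sub hv with hv | hv
                      · exact hv ▸ hmC
                      · exact hintC v hv
                  · -- verbatim forward step
                    obtain ⟨t₂', hto, htl⟩ := ih (Walk.cons e₂ t₂) (by omega) True True
                      hgt hlt hmC (fun _ => Or.inl trivial)
                    refine ⟨Walk.cons (Edge.fwd ((hdir u mm).1 hd)) t₂', ?_, ?_⟩
                    · rw [Walk.OF_cons]
                      exact ⟨⟨fun hh => hh.2.elim, fun _ => huC⟩, hto⟩
                    · exact (Walk.lastHd_indep t₂' False _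
                        (Walk.pos_length_of_lastHd t₂' htl)).1 htl
          | bwd hd =>
              have hnp : ¬ p := fun hp => huC (hj1 ⟨hp, trivial⟩)
              cases t with
              | nil => exact absurd hlt' not_false
              | @cons _ m₂ _ e₂ t₂ =>
                  have hlt : Walk.lastHd False (Walk.cons e₂ t₂) :=
                    (Walk.lastHd_indep (Walk.cons e₂ t₂) _ _ (Nat.succ_pos _)).1 hlt'
                  have hmm2C : mm ∉ C := by
                    rw [Walk.GFC_cons] at hgt
                    exact hgt.1.2 (fun hh => hh.1.elim)
                  obtain ⟨t₂', hto, htl⟩ := ih (Walk.cons e₂ t₂) (by omega) False False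
                    hgt hlt hmm2C (fun f => f.elim)
                  refine ⟨Walk.cons (Edge.bwd ((hdir mm u).1 hd)) t₂', ?_, ?_⟩
                  · rw [Walk.OF_cons]
                    refine ⟨⟨fun hh => (hqp hh.1).resolve_left hnp, fun _ => huC⟩, hto⟩
                  · exact (Walk.lastHd_indep t₂' False _
                      (Walk.pos_length_of_lastHd t₂' htl)).1 htl
          | bl g =>
              have hnp : ¬ p := fun hp => huC (hj1 ⟨hp, trivial⟩)
              have hq' : q → u ∈ H.ancSet C := fun hq₀ => (hqp hq₀).resolve_left hnp
              cases t with
              | nil => exact absurd hlt' not_false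
              | @cons _ m₂ _ e₂ t₂ =>
                  have hlt : Walk.lastHd False (Walk.cons e₂ t₂) :=
                    (Walk.lastHd_indep (Walk.cons e₂ t₂) _ _ (Nat.succ_pos _)).1 hlt'
                  by_cases hmC : mm ∈ C
                  · -- blunt edge into a collider zone
                    obtain ⟨y, κt, wrest, heq, hκpos, hcf, hintC, hyC, hdisj, hgw, hlw⟩ :=
                      kpParse (Walk.cons e₂ t₂) hgt hlt hmC
                    have hlen' : wrest.length ≤ n := by
                      have h1 : (Walk.cons e₂ t₂).length = κt.length + wrest.length := by
                        rw [heq, Walk.length_append]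
                      omega
                    refine kcore hdir hcov ih (Walk.cons (Edge.bl g) κt) wrest
                      (Nat.succ_pos _) ?_ ?_ hyC huC
                      (hdisj.imp id (fun hh => (ancSet_congr hdir C) ▸ hh))
                      hgw hlw hlen' q hq'
                    · rw [Walk.allColliders_cons]
                      exact hcf
                    · intro v hv
                      rcases internal_cons_sub hv with hv | hv
                      · exact hv ▸ hmC
                      · exact hintC v hv
                  · -- single blunt edge, zone of length one
                    refine kcore hdir hcov ih (Walk.cons (Edge.bl g) (Walk.nil mm))
                      (Walk.cons e₂ t₂) (Nat.succ_pos _) ?_ ?_ hmC huC (Or.inl trivial)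
                      hgt hlt (by omega) q hq'
                    · rw [Walk.allColliders_cons]
                      trivial
                    · intro v hv
                      simp [Walk.internal] at hv

/-- Transfer of μ-connection from `G` to `H`. -/
lemma muConn_transfer (hdir : ∀ a b, G.dir a b ↔ H.dir a b)
    (hcov : ∀ (α β : V) (w : G.Walk α β), IsColliderPath w →
      ∃ w' : H.Walk α β, IsColliderPath w' ∧
        ∀ m ∈ w'.internal, m ∈ G.ancSet ({α, β} ∪ {x | x ∈ w.internal}))
    {a b : V} (h : G.muConn C a b) : H.muConn C a b := by
  rw [muConn_iff_OF] at h ⊢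
  obtain ⟨ha, w, ho, hl⟩ := h
  obtain ⟨w', hg, hl'⟩ := normalize w False ho hl
  obtain ⟨w₂, ho₂, hl₂⟩ := TRmain hdir hcov w'.length w' le_rfl False False hg hl' ha
    (fun f => f.elim)
  exact ⟨ha, w₂, ho₂, hl₂⟩

end Transfer

section Forward

variable {C : Set V}

/-- Extract the last directed edge of the walk reaching `b`, when everything
except `a` is conditioned on. -/
lemma dir_of_muConn_walk {a : V} : ∀ {u b : V} (w : D.Walk u b) (q : Prop),
    w.OF {x | x ≠ a} q → Walk.lastHd False w → D.dir a b
  | _, _, .nil _, _, _, hl => absurd hl not_false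
  | u, b, .cons e t, q, ho, hl => by
      cases t with
      | nil =>
          have hl' : e.headRight := hl
          obtain ⟨hd, rfl⟩ := Edge.eq_fwd_of_headRight e hl'
          have hua : u ∉ {x | x ≠ a} := (Walk.OF_cons.1 ho).1.2 (fun hh => hh.2.elim)
          have : u = a := not_not.1 hua
          exact this ▸ hd
      | cons e₂ t₂ =>
          exact dir_of_muConn_walk (Walk.cons e₂ t₂) e.neckRight (Walk.OF_cons.1 ho).2
            ((Walk.lastHd_indep (Walk.cons e₂ t₂) e.headRight False (Nat.succ_pos _)).1 hl)

variable {T : Set V}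

/-- Chasing a directed out-edge rightwards: impossible to stay outside `T`. -/
lemma chaseRight (hsub : D.ancSet C ⊆ T) (hcl : ∀ m z, D.dir m z → z ∈ T → m ∈ T) :
    ∀ {u t : V} (w : D.Walk u t), w.OF C True → u ∉ T → t ∈ T → False
  | _, _, .nil _, _, hu, ht => hu ht
  | u, t, .cons e w', ho, hu, ht => by
      have hnl : ¬ e.neckLeft := fun hnl => hu (hsub ((Walk.OF_cons.1 ho).1.1 ⟨trivial, hnl⟩))
      obtain ⟨hd, rfl⟩ := Edge.eq_fwd_of_not_neckLeft e hnl
      have hm : _ ∉ T := fun hm => hu (hcl _ _ hd hm)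
      exact chaseRight hsub hcl w' (Walk.OF_cons.1 ho).2 hm ht

/-- Decompose off the last edge of a nonempty walk. -/
lemma snoc_decomp : ∀ {a c : V} (w : D.Walk a c), 0 < w.length →
    ∃ (d : V) (w' : D.Walk a d) (e : D.Edge d c),
      w = w'.append (Walk.cons e (Walk.nil c)) ∧ w.length = w'.length + 1
  | _, _, .nil _, h => absurd h (by simp [Walk.length])
  | a, c, .cons e t, _ => by
      cases t with
      | nil => exact ⟨a, Walk.nil a, e, rfl, rfl⟩
      | cons e₂ t₂ =>
          obtain ⟨d, w', e', heq, hlen⟩ := snoc_decomp (Walk.cons e₂ t₂) (Nat.succ_pos _)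
          refine ⟨d, Walk.cons e w', e', by rw [heq]; rfl, ?_⟩
          simp only [Walk.length] at hlen ⊢
          omega

/-- Chasing leftwards. -/
lemma chaseLeft (hsub : D.ancSet C ⊆ T) (hcl : ∀ m z, D.dir m z → z ∈ T → m ∈ T) :
    ∀ (n : ℕ) {α v : V} (w₁ : D.Walk α v) (q : Prop), w₁.length ≤ n → w₁.OF C q →
      ¬ Walk.lastR q w₁ → v ∉ T → α ∈ T → False := by
  intro n
  induction n with
  | zero =>
      intro α v w₁ q hlen _ _ hv hα
      have : α = v := Walk.eq_of_length_zero w₁ (Nat.le_zero.1 hlen)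
      exact hv (this ▸ hα)
  | succ n ih =>
      intro α v w₁ q hlen ho hnr hv hα
      rcases Nat.eq_zero_or_pos w₁.length with h0 | h0
      · exact hv ((Walk.eq_of_length_zero w₁ h0) ▸ hα)
      · obtain ⟨d, w', e, heq, hlen'⟩ := snoc_decomp w₁ h0
        have hnr' : ¬ Walk.lastR (Walk.lastR q w') (Walk.cons e (Walk.nil v)) := by
          intro hc
          apply hnr
          rw [heq, Walk.lastR_append]
          exact hc
        have hnre : ¬ e.neckRight := hnr'
        have hd : ∃ hdd : D.dir v d, e = Edge.bwd hdd := by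
          cases e with
          | fwd hdd => exact absurd trivial hnre
          | bwd hdd => exact ⟨hdd, rfl⟩
          | bl g => exact absurd trivial hnre
        obtain ⟨hdd, rfl⟩ := hd
        have hdT : d ∉ T := fun hm => hv (hcl _ _ hdd hm)
        have hosplit : w'.OF C q ∧ Walk.OF C (Walk.lastR q w')
            (Walk.cons (Edge.bwd hdd) (Walk.nil v)) := by
          rw [← Walk.OF_append, ← heq]
          exact ho
        have hnq : ¬ Walk.lastR q w' := by
          intro hq
          exact hdT (hsub ((Walk.OF_cons.1 hosplit.2).1.1 ⟨hq, trivial⟩))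
        exact ih w' q (by omega) hosplit.1 hnq hdT hα

lemma internalSplit : ∀ {a b v : V} (w : D.Walk a b), v ∈ w.internal →
    ∃ (w₁ : D.Walk a v) (w₂ : D.Walk v b),
      w = w₁.append w₂ ∧ 0 < w₁.length ∧ 0 < w₂.length
  | _, _, v, .nil _, h => by simp [Walk.internal] at h
  | a, b, v, .cons e t, h => by
      cases t with
      | nil => simp [Walk.internal] at h
      | cons e₂ t₂ =>
          rcases internal_cons_sub h with h | h
          · subst h
            exact ⟨Walk.cons e (Walk.nil v), Walk.cons e₂ t₂, rfl, Nat.succ_pos _,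
              Nat.succ_pos _⟩
          · obtain ⟨t₁', t₂', heq, hp1, hp2⟩ := internalSplit (Walk.cons e₂ t₂) h
            exact ⟨Walk.cons e t₁', t₂', by rw [heq]; rfl, Nat.succ_pos _, hp2⟩

/-- Every internal node of a μ-open walk between elements of `T` lies in `T`. -/
lemma chase (hsub : D.ancSet C ⊆ T) (hcl : ∀ m z, D.dir m z → z ∈ T → m ∈ T)
    {α β v : V} (w : D.Walk α β) (q : Prop) (ho : w.OF C q) (hv : v ∈ w.internal)
    (hα : α ∈ T) (hβ : β ∈ T) : v ∈ T := by
  by_contra hvT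
  obtain ⟨w₁, w₂, heq, hp1, hp2⟩ := internalSplit w hv
  have hosplit : w₁.OF C q ∧ w₂.OF C (Walk.lastR q w₁) := by
    rw [← Walk.OF_append, ← heq]
    exact ho
  cases w₂ with
  | nil => exact absurd hp2 (by simp [Walk.length])
  | cons e₂ t₂ =>
      by_cases hnl : e₂.neckLeft
      · have hnq : ¬ Walk.lastR q w₁ := fun hq =>
          hvT (hsub ((Walk.OF_cons.1 hosplit.2).1.1 ⟨hq, hnl⟩))
        exact chaseLeft hsub hcl w₁.length w₁ q le_rfl hosplit.1 hnq hvT hα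
      · obtain ⟨hd, rfl⟩ := Edge.eq_fwd_of_not_neckLeft e₂ hnl
        have hm : _ ∉ T := fun hm => hvT (hcl _ _ hd hm)
        exact chaseRight hsub hcl t₂ (Walk.OF_cons.1 hosplit.2).2 hm hβ

/-- Split at the first internal node satisfying `P`. -/
lemma firstSplit (P : V → Prop) : ∀ {x y : V} (w : D.Walk x y),
    (∀ v ∈ w.internal, ¬ P v) ∨ ∃ (v : V) (w₁ : D.Walk x v) (w₂ : D.Walk v y),
      w = w₁.append w₂ ∧ P v ∧ 0 < w₁.length ∧ 0 < w₂.length ∧ ∀ m ∈ w₁.internal, ¬ P m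
  | _, _, .nil _ => Or.inl (fun v hv => by simp [Walk.internal] at hv)
  | x, y, .cons (m := mv) e t => by
      cases t with
      | nil => exact Or.inl (fun v hv => by simp [Walk.internal] at hv)
      | @cons _ mz _ e₂ t₂ =>
          by_cases hP : P mv
          · exact Or.inr ⟨_, Walk.cons e (Walk.nil _), Walk.cons e₂ t₂, rfl, hP,
              Nat.succ_pos _, Nat.succ_pos _, fun m hm => by simp [Walk.internal] at hm⟩
          · rcases firstSplit P (Walk.cons e₂ t₂) with hno | ⟨v, t₁, t₂', heq, hPv, hp1, hp2, hnone⟩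
            · refine Or.inl ?_
              intro v hv
              rcases internal_cons_sub hv with hv | hv
              · exact hv ▸ hP
              · exact hno v hv
            · refine Or.inr ⟨v, Walk.cons e t₁, t₂', by rw [heq]; rfl, hPv,
                Nat.succ_pos _, hp2, ?_⟩
              intro m hm
              rcases internal_cons_sub hm with hm | hm
              · exact hm ▸ hP
              · exact hnone m hm

/-- A μ-open walk whose internal nodes are all in `C` is a collider chain. -/
lemma collOfC : ∀ {m y : V} (t : D.Walk m y) (q : Prop), t.OF C q →
    (0 < t.length → m ∈ C) → (∀ v ∈ t.internal, v ∈ C) → t.CF q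
  | _, _, .nil _, _, _, _, _ => trivial
  | m, y, .cons e' t', q, ho, hm, hint => by
      rw [Walk.OF_cons] at ho
      have hmC : m ∈ C := hm (Nat.succ_pos _)
      have hcol : q ∧ e'.neckLeft := by
        by_contra hn
        exact ho.1.2 hn hmC
      rw [Walk.CF_cons]
      refine ⟨hcol, collOfC t' e'.neckRight ho.2 ?_ (fun v hv => hint v (Walk.mem_internal_cons hv))⟩
      intro hp
      cases t' with
      | nil => exact absurd hp (by simp [Walk.length])
      | cons e₃ t₃ =>
          exact hint _ (by rw [Walk.internal_cons_cons]; exact List.mem_cons_self)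

/-- A collider chain with colliders in `an(C)` is μ-open. -/
lemma OF_of_CF : ∀ {m y : V} (t : D.Walk m y) (q : Prop), t.CF q →
    (0 < t.length → m ∈ D.ancSet C) → (∀ v ∈ t.internal, v ∈ D.ancSet C) → t.OF C q
  | _, _, .nil _, _, _, _, _ => trivial
  | m, y, .cons e' t', q, hcf, hm, hint => by
      rw [Walk.CF_cons] at hcf
      rw [Walk.OF_cons]
      refine ⟨⟨fun _ => hm (Nat.succ_pos _), fun hn => absurd hcf.1 hn⟩,
        OF_of_CF t' e'.neckRight hcf.2 ?_ (fun v hv => hint v (Walk.mem_internal_cons hv))⟩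
      intro hp
      cases t' with
      | nil => exact absurd hp (by simp [Walk.length])
      | cons e₃ t₃ =>
          exact hint _ (by rw [Walk.internal_cons_cons]; exact List.mem_cons_self)

/-- Extract a collider segment from `α` to `β` out of a μ-open walk. -/
lemma segMain {α β : V} (hne : α ≠ β)
    (hsub : D.ancSet C ⊆ T) (hcl : ∀ m z, D.dir m z → z ∈ T → m ∈ T)
    (hCdef : ∀ v, v ∈ T → v ≠ α → v ≠ β → v ∈ C) (hα : α ∈ T) (hβ : β ∈ T) :
    ∀ (n : ℕ) (w : D.Walk α β), w.length ≤ n → ∀ (q : Prop), w.OF C q →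
      ∃ seg : D.Walk α β, 0 < seg.length ∧ seg.allColliders ∧ ∀ v ∈ seg.internal, v ∈ C := by
  intro n
  induction n with
  | zero =>
      intro w hlen q _
      exact absurd (Walk.eq_of_length_zero w (Nat.le_zero.1 hlen)) hne
  | succ n ih =>
      intro w hlen q ho
      have hgood : ∀ (w' : D.Walk α β) (q' : Prop), w'.OF C q' →
          (∀ v ∈ w'.internal, v ∈ w.internal) →
          (∀ v ∈ w'.internal, ¬ (v = α ∨ v = β)) →
          ∃ seg : D.Walk α β, 0 < seg.length ∧ seg.allColliders ∧
            ∀ v ∈ seg.internal, v ∈ C := by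
        intro w' q' ho' hsubint hno
        have hintC : ∀ v ∈ w'.internal, v ∈ C := by
          intro v hv
          have hvT : v ∈ T := chase hsub hcl w q ho (hsubint v hv) hα hβ
          exact hCdef v hvT (fun h => hno v hv (Or.inl h)) (fun h => hno v hv (Or.inr h))
        refine ⟨w', Walk.pos_length_of_ne w' hne, ?_, hintC⟩
        cases w' with
        | nil => trivial
        | cons e' t' =>
            rw [Walk.allColliders_cons]
            refine collOfC t' e'.neckRight (Walk.OF_cons.1 ho').2 ?_
              (fun v hv => hintC v (Walk.mem_internal_cons hv))
            intro hp
            cases t' with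
            | nil => exact absurd hp (by simp [Walk.length])
            | cons e₃ t₃ =>
                exact hintC _ (by rw [Walk.internal_cons_cons]; exact List.mem_cons_self)
      rcases firstSplit (fun v => v = α ∨ v = β) w with hno | ⟨v, w₁, w₂, heq, hPv, hp1, hp2, hnone⟩
      · exact hgood w q ho (fun _ h => h) hno
      · have hosplit : w₁.OF C q ∧ w₂.OF C (Walk.lastR q w₁) := by
          rw [← Walk.OF_append, ← heq]; exact ho
        rcases hPv with rfl | rfl
        · -- v = α : recurse on the suffix
          have hlen₂ : w₂.length ≤ n := by
            have h1 : w.length = w₁.length + w₂.length := by rw [heq, Walk.length_append]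
            omega
          exact ih w₂ hlen₂ _ hosplit.2
        · -- v = β : use the prefix
          refine hgood w₁ q hosplit.1 ?_ hnone
          intro v hv
          rw [heq]
          exact Walk.internal_append_left _ _ hv

end Forward

section Assembly

variable {G H : CDG V}

/-- Directed edges transfer under one-sided Markov implication. -/
lemma dir_transfer (hmu : ∀ (Cs : Set V) (x y : V), G.muConn Cs x y → H.muConn Cs x y)
    (a b : V) (hab : G.dir a b) : H.dir a b := by
  have hG : G.muConn {x | x ≠ a} a b := by
    refine ⟨fun h => h rfl, Walk.cons (Edge.fwd hab) (Walk.nil b), ?_, ?_⟩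
    · exact (Walk.mOpen_cons _ _).2 trivial
    · exact (Walk.lastHead_cons _ _).2 trivial
  have hH := hmu _ a b hG
  rw [muConn_iff_OF] at hH
  obtain ⟨_, w, ho, hl⟩ := hH
  exact dir_of_muConn_walk w False ho hl

/-- Collider coverage from Markov implication. -/
lemma coverage_of_markov (hdir : ∀ a b, G.dir a b ↔ H.dir a b) (hloop : ∀ a, G.dir a a)
    (hmu : ∀ (Cs : Set V) (x y : V), G.muConn Cs x y → H.muConn Cs x y)
    (α β : V) (w : G.Walk α β) (hicp : IsColliderPath w) :
    ∃ w' : H.Walk α β, IsColliderPath w' ∧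
      ∀ m ∈ w'.internal, m ∈ G.ancSet ({α, β} ∪ {x | x ∈ w.internal}) := by
  obtain ⟨hpos, hnd, hac⟩ := hicp
  have hne : α ≠ β := ne_endpoints_of_nodup w hnd hpos
  set S : Set V := {α, β} ∪ {x | x ∈ w.internal} with hS
  set T : Set V := G.ancSet S with hT
  set Cs : Set V := T \ {α, β} with hCs
  have hαT : α ∈ T := mem_ancSet_of_mem (Or.inl (Set.mem_insert _ _))
  have hβT : β ∈ T := mem_ancSet_of_mem (Or.inl (Set.mem_insert_of_mem _ rfl))
  have hαC : α ∉ Cs := fun h => h.2 (Set.mem_insert _ _)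
  have hβC : β ∉ Cs := fun h => h.2 (Set.mem_insert_of_mem _ rfl)
  have hintC : ∀ γ ∈ w.internal, γ ∈ Cs := by
    intro γ hγ
    obtain ⟨h1, h2⟩ := internal_ne_endpoints_of_nodup w hnd hγ
    refine ⟨mem_ancSet_of_mem (Or.inr hγ), ?_⟩
    simp only [Set.mem_insert_iff, Set.mem_singleton_iff]
    tauto
  have hGconn : G.muConn Cs α β := by
    rw [muConn_iff_OF]
    refine ⟨hαC, w.append (Walk.cons (Edge.fwd (hloop β)) (Walk.nil β)), ?_, ?_⟩
    · rw [Walk.OF_append]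
      constructor
      · cases w with
        | nil => exact absurd hpos (by simp [Walk.length])
        | cons e t =>
            rw [Walk.OF_cons]
            refine ⟨⟨fun hh => hh.1.elim, fun _ => hαC⟩, ?_⟩
            refine OF_of_CF t e.neckRight ((Walk.allColliders_cons e t).1 hac) ?_ ?_
            · intro hp
              cases t with
              | nil => exact absurd hp (by simp [Walk.length])
              | cons e₃ t₃ =>
                  exact mem_ancSet_of_mem (hintC _
                    (by rw [Walk.internal_cons_cons]; exact List.mem_cons_self))
            · exact fun v hv => mem_ancSet_of_mem (hintC v (Walk.mem_internal_cons hv))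
      · rw [Walk.OF_cons]
        exact ⟨⟨fun hh => hh.2.elim, fun _ => hβC⟩, trivial⟩
    · rw [Walk.lastHd_append]
      exact trivial
  have hHconn := hmu Cs α β hGconn
  rw [muConn_iff_OF] at hHconn
  obtain ⟨-, ω₂, ho₂, hl₂⟩ := hHconn
  have hsub : H.ancSet Cs ⊆ T := by
    rw [← ancSet_congr hdir Cs]
    exact ancSet_of_subset_ancSet (fun z hz => hz.1)
  have hcl : ∀ m z, H.dir m z → z ∈ T → m ∈ T := fun m z hmz hzT =>
    ancSet_closed ((hdir m z).2 hmz) hzT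
  have hCdef : ∀ v, v ∈ T → v ≠ α → v ≠ β → v ∈ Cs := by
    intro v hvT h1 h2
    refine ⟨hvT, ?_⟩
    simp only [Set.mem_insert_iff, Set.mem_singleton_iff]
    tauto
  obtain ⟨seg, hspos, hsac, hsint⟩ :=
    segMain hne hsub hcl hCdef hαT hβT ω₂.length ω₂ le_rfl False ho₂
  obtain ⟨π, hπac, hπsup, hπnd⟩ := extract hne seg.length seg le_rfl hsac
  refine ⟨π, ⟨Walk.pos_length_of_ne π hne, hπnd, hπac⟩, ?_⟩
  intro m hm
  have hms := hπsup m (Walk.internal_subset_support π hm)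
  rcases Walk.mem_support_cases seg hms with rfl | rfl | hmi
  · exact hαT
  · exact hβT
  · exact (hsint m hmi).1

end Assembly

end CDG

end Toolkit

/-- Two cDGs containing every loop are Markov equivalent iff they
have the same directed edges and are collider equivalent. -/
theorem stmt6 {V : Type} (D₁ D₂ : CDG V)
    (h1 : ∀ a, D₁.dir a a) (h2 : ∀ a, D₂.dir a a) :
    D₁.indep = D₂.indep ↔
      ((∀ a b, D₁.dir a b ↔ D₂.dir a b) ∧ ColliderEquiv D₁ D₂) := by
  constructor
  · intro hind
    have hmu : ∀ (Cs : Set V) (x y : V), D₁.muConn Cs x y ↔ D₂.muConn Cs x y := by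
      intro Cs x y
      have h := Set.ext_iff.1 hind ({x}, {y}, Cs)
      simp only [CDG.indep, CDG.muSep, Set.mem_setOf_eq, Set.mem_singleton_iff,
        forall_eq] at h
      exact not_iff_not.1 h
    have hdir : ∀ a b, D₁.dir a b ↔ D₂.dir a b := fun a b =>
      ⟨CDG.dir_transfer (fun Cs x y => (hmu Cs x y).1) a b,
       CDG.dir_transfer (fun Cs x y => (hmu Cs x y).2) a b⟩
    refine ⟨hdir, ?_, ?_⟩
    · intro α β w hicp
      exact CDG.coverage_of_markov hdir h1 (fun Cs x y => (hmu Cs x y).1) α β w hicp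
    · intro α β w hicp
      exact CDG.coverage_of_markov (fun a b => (hdir a b).symm) h2
        (fun Cs x y => (hmu Cs x y).2) α β w hicp
  · rintro ⟨hdir, hcov₁, hcov₂⟩
    have hmu12 : ∀ (Cs : Set V) (x y : V), D₁.muConn Cs x y → D₂.muConn Cs x y :=
      fun Cs x y h => CDG.muConn_transfer hdir (fun α β ww hh => hcov₁ α β ww hh) h
    have hmu21 : ∀ (Cs : Set V) (x y : V), D₂.muConn Cs x y → D₁.muConn Cs x y :=
      fun Cs x y h => CDG.muConn_transfer (fun a b => (hdir a b).symm)
        (fun α β ww hh => hcov₂ α β ww hh) h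
    ext p
    simp only [CDG.indep, CDG.muSep, Set.mem_setOf_eq]
    constructor
    · intro h a ha b hb hc
      exact h a ha b hb (hmu21 _ _ _ hc)
    · intro h a ha b hb hc
      exact h a ha b hb (hmu12 _ _ _ hc)
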